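/- Von Neumann's trace inequality: for matrices A, B ∈ ℂ^{m×n} with q = min(m,n), one has Re(trace(Bᴴ A)) ≤ Σ_{i=1}^{q} σ_i(A)·σ_i(B), where σ_i denotes the i-th largest singular value. Moreover equality holds when A and B admit SVDs with the same left and right singular vector matrices. -/

import Mathlib

open Matrix Finset

/-- Real (Frobenius) inner product `⟨X,Y⟩ = Re(trace(Yᴴ X))`. -/
noncomputable def finner {m n : ℕ} (X Y : Matrix (Fin m) (Fin n) ℂ) : ℝ :=
  (Matrix.trace (Yᴴ * X)).re

/-- The `m × n` rectangular diagonal matrix with diagonal entries `σ 0, σ 1, …`. -/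
def svdDiagMatrix (m n : ℕ) (σ : ℕ → ℝ) : Matrix (Fin m) (Fin n) ℂ :=
  Matrix.of fun i j => if (i : ℕ) = (j : ℕ) then (σ (i : ℕ) : ℂ) else 0

/-- `σ` lists the singular values of `A` in nonincreasing order (padding with zeros). -/
def IsSingularValues {m n : ℕ} (A : Matrix (Fin m) (Fin n) ℂ) (σ : ℕ → ℝ) : Prop :=
  (∀ i, 0 ≤ σ i) ∧ (∀ i j, i ≤ j → σ j ≤ σ i) ∧ (∀ i, min m n ≤ i → σ i = 0) ∧
    ∃ U ∈ Matrix.unitaryGroup (Fin m) ℂ, ∃ V ∈ Matrix.unitaryGroup (Fin n) ℂ,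
      A = U * svdDiagMatrix m n σ * Vᴴ

section Helpers

lemma filter_le_range (q s : ℕ) (hs : s < q) :
    (Finset.range q).filter (fun j => j ≤ s) = Finset.range (s+1) := by
  ext j; simp [Nat.lt_succ_iff]; omega

lemma sum_ite_le {q s : ℕ} (hs : s < q) (f : ℕ → ℝ) :
    ∑ j ∈ range q, (if j ≤ s then f j else 0) = ∑ j ∈ range (s+1), f j := by
  rw [← filter_le_range q s hs, Finset.sum_filter]

lemma telescope {q : ℕ} (a : ℕ → ℝ) (haq : a q = 0) {k : ℕ} (hk : k < q) :
    ∑ t ∈ range q, (if k ≤ t then a t - a (t+1) else 0) = a k := by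
  have hfil : (range q).filter (fun t => k ≤ t) = Finset.Ico k q := by
    ext t; simp; omega
  rw [← Finset.sum_filter, hfil, Finset.sum_Ico_eq_sub _ hk.le,
    Finset.sum_range_sub' a, Finset.sum_range_sub' a, haq]
  ring

lemma sum4_swap (A : Finset ℕ) (f : ℕ → ℕ → ℕ → ℕ → ℝ) :
    ∑ j ∈ A, ∑ k ∈ A, ∑ s ∈ A, ∑ t ∈ A, f j k s t
      = ∑ s ∈ A, ∑ t ∈ A, ∑ j ∈ A, ∑ k ∈ A, f j k s t := by
  rw [Finset.sum_congr rfl (fun j _ => Finset.sum_comm), Finset.sum_comm]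
  exact Finset.sum_congr rfl (fun s _ => by
    rw [Finset.sum_congr rfl (fun j _ => Finset.sum_comm), Finset.sum_comm])

lemma key (q : ℕ) (a b : ℕ → ℝ)
    (haM : ∀ i j, i ≤ j → a j ≤ a i) (hbM : ∀ i j, i ≤ j → b j ≤ b i)
    (haq : a q = 0) (hbq : b q = 0)
    (c : ℕ → ℕ → ℝ) (hc0 : ∀ j k, 0 ≤ c j k)
    (hrow : ∀ j, j < q → ∑ k ∈ range q, c j k ≤ 1)
    (hcol : ∀ k, k < q → ∑ j ∈ range q, c j k ≤ 1) :
    ∑ j ∈ range q, ∑ k ∈ range q, b j * a k * c j k ≤ ∑ i ∈ range q, a i * b i := by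
  set Δa : ℕ → ℝ := fun t => a t - a (t+1) with hΔa
  set Δb : ℕ → ℝ := fun s => b s - b (s+1) with hΔb
  have hΔa0 : ∀ t, 0 ≤ Δa t := fun t => sub_nonneg.mpr (haM t (t+1) (Nat.le_succ t))
  have hΔb0 : ∀ s, 0 ≤ Δb s := fun s => sub_nonneg.mpr (hbM s (s+1) (Nat.le_succ s))
  set S : ℕ → ℕ → ℝ := fun s t => ∑ j ∈ range (s+1), ∑ k ∈ range (t+1), c j k with hS
  have hL : ∑ j ∈ range q, ∑ k ∈ range q, b j * a k * c j k
      = ∑ s ∈ range q, ∑ t ∈ range q, Δb s * Δa t * S s t := by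
    have step1 : ∀ j ∈ range q, ∀ k ∈ range q, b j * a k * c j k
        = ∑ s ∈ range q, ∑ t ∈ range q,
            (if j ≤ s ∧ k ≤ t then Δb s * Δa t * c j k else 0) := by
      intro j hj k hk
      rw [mem_range] at hj hk
      have : ∀ s t, (if j ≤ s ∧ k ≤ t then Δb s * Δa t * c j k else 0)
          = (if j ≤ s then Δb s else 0) * ((if k ≤ t then Δa t else 0) * c j k) := by
        intro s t
        by_cases h1 : j ≤ s <;> by_cases h2 : k ≤ t <;> simp [h1, h2, mul_assoc]
      simp only [this]
      rw [← Finset.sum_mul_sum, ← Finset.sum_mul, telescope a haq hk,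
        telescope b hbq hj, mul_assoc]
    rw [Finset.sum_congr rfl (fun j hj => Finset.sum_congr rfl (fun k hk => step1 j hj k hk)),
      sum4_swap]
    refine Finset.sum_congr rfl (fun s hs => Finset.sum_congr rfl (fun t ht => ?_))
    rw [mem_range] at hs ht
    have inner : ∀ j, (∑ k ∈ range q, if j ≤ s ∧ k ≤ t then Δb s * Δa t * c j k else 0)
        = if j ≤ s then ∑ k ∈ range (t+1), Δb s * Δa t * c j k else 0 := by
      intro j
      by_cases hj : j ≤ s
      · simp only [hj, true_and]; exact sum_ite_le ht _
      · simp [hj]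
    simp only [inner]
    rw [sum_ite_le hs]
    simp only [hS, Finset.mul_sum]
  rw [hL]
  have hR : ∑ i ∈ range q, a i * b i
      = ∑ s ∈ range q, ∑ t ∈ range q, Δb s * Δa t * ((min s t : ℕ) + 1 : ℝ) := by
    have step1 : ∀ i ∈ range q, a i * b i
        = ∑ s ∈ range q, ∑ t ∈ range q,
            (if i ≤ s ∧ i ≤ t then Δb s * Δa t else 0) := by
      intro i hi
      rw [mem_range] at hi
      have : ∀ s t, (if i ≤ s ∧ i ≤ t then Δb s * Δa t else 0)
          = (if i ≤ s then Δb s else 0) * (if i ≤ t then Δa t else 0) := by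
        intro s t
        by_cases h1 : i ≤ s <;> by_cases h2 : i ≤ t <;> simp [h1, h2]
      simp only [this]
      rw [← Finset.sum_mul_sum, telescope a haq hi, telescope b hbq hi, mul_comm]
    rw [Finset.sum_congr rfl step1, Finset.sum_comm]
    refine Finset.sum_congr rfl (fun s hs => ?_)
    rw [Finset.sum_comm]
    refine Finset.sum_congr rfl (fun t ht => ?_)
    rw [mem_range] at hs ht
    have hmin : min s t < q := lt_of_le_of_lt (min_le_left s t) hs
    have : ∀ i, (if i ≤ s ∧ i ≤ t then Δb s * Δa t else 0)
        = if i ≤ min s t then Δb s * Δa t else 0 := by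
      intro i; congr 1; simp [le_min_iff]
    simp only [this]
    rw [sum_ite_le hmin, Finset.sum_const]
    simp [Finset.card_range]
    ring
  rw [hR]
  refine Finset.sum_le_sum (fun s hs => Finset.sum_le_sum (fun t ht => ?_))
  rw [mem_range] at hs ht
  have hSb : S s t ≤ ((min s t : ℕ) + 1 : ℝ) := by
    rcases le_total s t with h | h
    · have : S s t ≤ ∑ j ∈ range (s+1), (1:ℝ) := by
        refine Finset.sum_le_sum (fun j hj => ?_)
        rw [mem_range] at hj
        have hj' : j < q := lt_of_lt_of_le hj hs
        calc ∑ k ∈ range (t+1), c j k ≤ ∑ k ∈ range q, c j k := by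
              refine Finset.sum_le_sum_of_subset_of_nonneg
                (Finset.range_subset_range.mpr ht) (fun k _ _ => hc0 j k)
          _ ≤ 1 := hrow j hj'
      simp only [Finset.sum_const, Finset.card_range, nsmul_eq_mul, mul_one] at this
      rw [min_eq_left h]
      calc S s t ≤ (s+1 : ℕ) := by exact_mod_cast this
        _ = ((s:ℝ)+1) := by push_cast; ring
    · have hcomm : S s t = ∑ k ∈ range (t+1), ∑ j ∈ range (s+1), c j k := Finset.sum_comm
      have : S s t ≤ ∑ k ∈ range (t+1), (1:ℝ) := by
        rw [hcomm]
        refine Finset.sum_le_sum (fun k hk => ?_)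
        rw [mem_range] at hk
        have hk' : k < q := lt_of_lt_of_le hk ht
        calc ∑ j ∈ range (s+1), c j k ≤ ∑ j ∈ range q, c j k := by
              refine Finset.sum_le_sum_of_subset_of_nonneg
                (Finset.range_subset_range.mpr hs) (fun j _ _ => hc0 j k)
          _ ≤ 1 := hcol k hk'
      simp only [Finset.sum_const, Finset.card_range, nsmul_eq_mul, mul_one] at this
      rw [min_eq_right h]
      calc S s t ≤ (t+1 : ℕ) := by exact_mod_cast this
        _ = ((t:ℝ)+1) := by push_cast; ring
  exact mul_le_mul_of_nonneg_left hSb (mul_nonneg (hΔb0 s) (hΔa0 t))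

lemma fin_sum_ite {m : ℕ} (t : ℕ) (f : Fin m → ℂ) :
    ∑ i : Fin m, (if (i:ℕ) = t then f i else 0) = if h : t < m then f ⟨t,h⟩ else 0 := by
  split
  · rename_i h
    rw [Finset.sum_eq_single (⟨t,h⟩ : Fin m)]
    · simp
    · intro b _ hb; rw [if_neg]; simpa [Fin.ext_iff] using hb
    · simp
  · rename_i h
    refine Finset.sum_eq_zero fun i _ => if_neg fun hc => ?_
    exact h (hc ▸ i.isLt)

/-- extension of a square matrix to ℕ-indices -/
def pext {p : ℕ} (M : Matrix (Fin p) (Fin p) ℂ) (a b : ℕ) : ℂ :=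
  if h : a < p ∧ b < p then M ⟨a, h.1⟩ ⟨b, h.2⟩ else 0

set_option linter.unnecessarySeqFocus false in
lemma trace_diag (m n : ℕ) (σA σB : ℕ → ℝ) (P : Matrix (Fin m) (Fin m) ℂ)
    (Q : Matrix (Fin n) (Fin n) ℂ) :
    Matrix.trace ((svdDiagMatrix m n σB)ᴴ * P * svdDiagMatrix m n σA * Q)
      = ∑ j ∈ Finset.range (min m n), ∑ k ∈ Finset.range (min m n),
          ((σB j : ℂ) * (σA k : ℂ)) * (pext P j k * pext Q k j) := by
  simp only [Matrix.trace, Matrix.diag, Matrix.mul_apply, Matrix.conjTranspose_apply,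
    svdDiagMatrix, Matrix.of_apply]
  have step1 : ∀ (j : Fin n) (k : Fin m),
      (∑ i : Fin m, star (if (i:ℕ) = (j:ℕ) then (σB (i:ℕ):ℂ) else 0) * P i k)
        = if h : (j:ℕ) < m then (σB (j:ℕ):ℂ) * P ⟨(j:ℕ), h⟩ k else 0 := by
    intro j k
    rw [← fin_sum_ite (↑j) (fun i => (σB (j:ℕ):ℂ) * P i k)]
    refine Finset.sum_congr rfl fun i _ => ?_
    by_cases h : (i:ℕ) = (j:ℕ)
    · simp [h, Complex.conj_ofReal]
    · simp [h]
  have step2 : ∀ (j ℓ : Fin n),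
      (∑ k : Fin m, (if h : (j:ℕ) < m then (σB (j:ℕ):ℂ) * P ⟨(j:ℕ), h⟩ k else 0) *
          (if (k:ℕ) = (ℓ:ℕ) then (σA (k:ℕ):ℂ) else 0))
        = (σB (j:ℕ):ℂ) * (σA (ℓ:ℕ):ℂ) * pext P (j:ℕ) (ℓ:ℕ) := by
    intro j ℓ
    have : ∀ k : Fin m,
        (if h : (j:ℕ) < m then (σB (j:ℕ):ℂ) * P ⟨(j:ℕ), h⟩ k else 0) *
          (if (k:ℕ) = (ℓ:ℕ) then (σA (k:ℕ):ℂ) else 0)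
        = if (k:ℕ) = (ℓ:ℕ) then
            ((if h : (j:ℕ) < m then (σB (j:ℕ):ℂ) * P ⟨(j:ℕ), h⟩ k else 0) * (σA (ℓ:ℕ):ℂ))
          else 0 := by
      intro k
      by_cases h : (k:ℕ) = (ℓ:ℕ)
      · simp [h]
      · simp [h]
    rw [Finset.sum_congr rfl fun k _ => this k, fin_sum_ite]
    by_cases hℓ : (ℓ:ℕ) < m <;> by_cases hj : (j:ℕ) < m <;>
      simp [hℓ, hj, pext] <;> ring
  simp only [step1, step2]
  have hQ : ∀ (ℓ j : Fin n), Q ℓ j = pext Q (ℓ:ℕ) (j:ℕ) := by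
    intro ℓ j; simp [pext]
  simp only [hQ]
  set g : ℕ → ℕ → ℂ := fun x y => (σB x : ℂ) * (σA y : ℂ) * pext P x y * pext Q y x with hg
  have h1 : ∑ j : Fin n, ∑ ℓ : Fin n, g (j:ℕ) (ℓ:ℕ) = ∑ j ∈ range n, ∑ ℓ ∈ range n, g j ℓ := by
    rw [← Fin.sum_univ_eq_sum_range (fun j => ∑ ℓ ∈ range n, g j ℓ) n]
    exact Finset.sum_congr rfl fun j _ => Fin.sum_univ_eq_sum_range _ n
  have hgz : ∀ x y : ℕ, ¬ x < m → g x y = 0 := by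
    intro x y hx; simp [hg, pext, hx]
  have hgz' : ∀ x y : ℕ, ¬ y < m → g x y = 0 := by
    intro x y hy; simp [hg, pext, hy]
  have h2 : ∑ j ∈ range n, ∑ ℓ ∈ range n, g j ℓ
      = ∑ j ∈ range (min m n), ∑ k ∈ range (min m n), g j k := by
    rw [← Finset.sum_subset (Finset.range_subset_range.mpr (min_le_right m n))]
    · refine Finset.sum_congr rfl fun j hj => ?_
      rw [← Finset.sum_subset (Finset.range_subset_range.mpr (min_le_right m n))]
      intro x hx hx'
      rw [mem_range] at hx; rw [mem_range] at hx'
      exact hgz' j x (by omega)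
    · intro x hx hx'
      rw [mem_range] at hx; rw [mem_range] at hx'
      exact Finset.sum_eq_zero fun y _ => hgz x y (by omega)
  calc ∑ j : Fin n, ∑ ℓ : Fin n, g (j:ℕ) (ℓ:ℕ)
      = ∑ j ∈ range (min m n), ∑ k ∈ range (min m n), g j k := by rw [h1, h2]
    _ = _ := by
      refine Finset.sum_congr rfl fun j _ => Finset.sum_congr rfl fun k _ => ?_
      simp [hg]; ring

lemma unitary_row {p : ℕ} {U : Matrix (Fin p) (Fin p) ℂ}
    (hU : U ∈ Matrix.unitaryGroup (Fin p) ℂ) (i : Fin p) :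
    ∑ k : Fin p, Complex.normSq (U i k) = 1 := by
  have h := Matrix.mem_unitaryGroup_iff.mp hU
  have h2 : (U * star U) i i = (1 : Matrix (Fin p) (Fin p) ℂ) i i := by rw [h]
  rw [Matrix.mul_apply, Matrix.one_apply_eq] at h2
  have h3 : ∀ j, U i j * (star U) j i = (Complex.normSq (U i j) : ℂ) := by
    intro j
    rw [Matrix.star_apply, ← Complex.mul_conj]
    rfl
  rw [Finset.sum_congr rfl fun j _ => h3 j, ← Complex.ofReal_sum] at h2
  exact_mod_cast h2

lemma unitary_col {p : ℕ} {U : Matrix (Fin p) (Fin p) ℂ}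
    (hU : U ∈ Matrix.unitaryGroup (Fin p) ℂ) (j : Fin p) :
    ∑ i : Fin p, Complex.normSq (U i j) = 1 := by
  have h := Matrix.mem_unitaryGroup_iff'.mp hU
  have h2 : (star U * U) j j = (1 : Matrix (Fin p) (Fin p) ℂ) j j := by rw [h]
  rw [Matrix.mul_apply, Matrix.one_apply_eq] at h2
  have h3 : ∀ i, (star U) j i * U i j = (Complex.normSq (U i j) : ℂ) := by
    intro i
    rw [Matrix.star_apply, mul_comm, ← Complex.mul_conj]
    rfl
  rw [Finset.sum_congr rfl fun i _ => h3 i, ← Complex.ofReal_sum] at h2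
  exact_mod_cast h2

lemma pext_row_sum {p q : ℕ} {M : Matrix (Fin p) (Fin p) ℂ}
    (hM : M ∈ Matrix.unitaryGroup (Fin p) ℂ) (hq : q ≤ p) {j : ℕ} (hj : j < p) :
    ∑ k ∈ range q, Complex.normSq (pext M j k) ≤ 1 := by
  calc ∑ k ∈ range q, Complex.normSq (pext M j k)
      ≤ ∑ k ∈ range p, Complex.normSq (pext M j k) :=
        Finset.sum_le_sum_of_subset_of_nonneg (Finset.range_subset_range.mpr hq)
          (fun _ _ _ => Complex.normSq_nonneg _)
    _ = ∑ k : Fin p, Complex.normSq (M ⟨j, hj⟩ k) := by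
        rw [← Fin.sum_univ_eq_sum_range (fun k => Complex.normSq (pext M j k)) p]
        exact Finset.sum_congr rfl fun k _ => by simp [pext, hj, k.isLt]
    _ = 1 := unitary_row hM _

lemma pext_col_sum {p q : ℕ} {M : Matrix (Fin p) (Fin p) ℂ}
    (hM : M ∈ Matrix.unitaryGroup (Fin p) ℂ) (hq : q ≤ p) {j : ℕ} (hj : j < p) :
    ∑ k ∈ range q, Complex.normSq (pext M k j) ≤ 1 := by
  calc ∑ k ∈ range q, Complex.normSq (pext M k j)
      ≤ ∑ k ∈ range p, Complex.normSq (pext M k j) :=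
        Finset.sum_le_sum_of_subset_of_nonneg (Finset.range_subset_range.mpr hq)
          (fun _ _ _ => Complex.normSq_nonneg _)
    _ = ∑ k : Fin p, Complex.normSq (M k ⟨j, hj⟩) := by
        rw [← Fin.sum_univ_eq_sum_range (fun k => Complex.normSq (pext M k j)) p]
        exact Finset.sum_congr rfl fun k _ => by simp [pext, hj, k.isLt]
    _ = 1 := unitary_col hM _

lemma trace_red (m n : ℕ) (σA σB : ℕ → ℝ) (U W : Matrix (Fin m) (Fin m) ℂ)
    (V X : Matrix (Fin n) (Fin n) ℂ) :
    Matrix.trace ((W * svdDiagMatrix m n σB * Xᴴ)ᴴ * (U * svdDiagMatrix m n σA * Vᴴ))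
      = Matrix.trace ((svdDiagMatrix m n σB)ᴴ * (Wᴴ * U) * svdDiagMatrix m n σA * (Vᴴ * X)) := by
  rw [show (W * svdDiagMatrix m n σB * Xᴴ)ᴴ * (U * svdDiagMatrix m n σA * Vᴴ)
      = X * ((svdDiagMatrix m n σB)ᴴ * ((Wᴴ * U) * (svdDiagMatrix m n σA * Vᴴ))) by
    simp only [conjTranspose_mul, conjTranspose_conjTranspose, Matrix.mul_assoc]]
  rw [Matrix.trace_mul_comm]
  simp only [Matrix.mul_assoc]

lemma re_le_half (z w : ℂ) : (z * w).re ≤ (Complex.normSq z + Complex.normSq w) / 2 := by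
  calc (z * w).re ≤ ‖z * w‖ := Complex.re_le_norm _
    _ = ‖z‖ * ‖w‖ := norm_mul _ _
    _ ≤ (Complex.normSq z + Complex.normSq w) / 2 := by
        have h := two_mul_le_add_sq ‖z‖ ‖w‖
        rw [Complex.sq_norm, Complex.sq_norm] at h
        linarith

end Helpers

theorem stmt_1 (m n : ℕ) (A B : Matrix (Fin m) (Fin n) ℂ) (σA σB : ℕ → ℝ)
    (hA : IsSingularValues A σA) (hB : IsSingularValues B σB) :
    finner B A ≤ (∑ i ∈ Finset.range (min m n), σA i * σB i) ∧
      ∀ U ∈ Matrix.unitaryGroup (Fin m) ℂ, ∀ V ∈ Matrix.unitaryGroup (Fin n) ℂ,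
        A = U * svdDiagMatrix m n σA * Vᴴ → B = U * svdDiagMatrix m n σB * Vᴴ →
          finner B A = ∑ i ∈ Finset.range (min m n), σA i * σB i := by
  obtain ⟨hA0, hAmono, hAzero, U, hU, V, hV, hAeq⟩ := hA
  obtain ⟨hB0, hBmono, hBzero, W, hW, X, hX, hBeq⟩ := hB
  constructor
  · -- the inequality
    set q := min m n with hq
    set P : Matrix (Fin m) (Fin m) ℂ := Uᴴ * W with hP
    set Q : Matrix (Fin n) (Fin n) ℂ := Xᴴ * V with hQ'
    have hPu : P ∈ Matrix.unitaryGroup (Fin m) ℂ := by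
      rw [hP, ← Matrix.star_eq_conjTranspose]
      exact mul_mem (Unitary.star_mem hU) hW
    have hQu : Q ∈ Matrix.unitaryGroup (Fin n) ℂ := by
      rw [hQ', ← Matrix.star_eq_conjTranspose]
      exact mul_mem (Unitary.star_mem hX) hV
    have htr : Matrix.trace (Aᴴ * B)
        = ∑ j ∈ range q, ∑ k ∈ range q, ((σA j : ℂ) * (σB k : ℂ)) * (pext P j k * pext Q k j) := by
      rw [hAeq, hBeq, trace_red m n σB σA W U X V, trace_diag]
    have hre : finner B A
        = ∑ j ∈ range q, ∑ k ∈ range q, σA j * σB k * (pext P j k * pext Q k j).re := by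
      show (Matrix.trace (Aᴴ * B)).re = _
      rw [htr]
      rw [Complex.re_sum]
      refine Finset.sum_congr rfl fun j _ => ?_
      rw [Complex.re_sum]
      refine Finset.sum_congr rfl fun k _ => ?_
      rw [← Complex.ofReal_mul, Complex.re_ofReal_mul]
    set c : ℕ → ℕ → ℝ := fun j k =>
      (Complex.normSq (pext P j k) + Complex.normSq (pext Q k j)) / 2 with hc
    have hineq1 : finner B A ≤ ∑ j ∈ range q, ∑ k ∈ range q, σA j * σB k * c j k := by
      rw [hre]
      refine Finset.sum_le_sum fun j _ => Finset.sum_le_sum fun k _ => ?_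
      exact mul_le_mul_of_nonneg_left (re_le_half _ _) (mul_nonneg (hA0 j) (hB0 k))
    have hineq2 : ∑ j ∈ range q, ∑ k ∈ range q, σA j * σB k * c j k
        ≤ ∑ i ∈ range q, σB i * σA i := by
      refine key q σB σA hBmono hAmono (hBzero q le_rfl) (hAzero q le_rfl) c ?_ ?_ ?_
      · intro j k
        exact div_nonneg (add_nonneg (Complex.normSq_nonneg _) (Complex.normSq_nonneg _))
          (by norm_num)
      · intro j hj
        have hjm : j < m := lt_of_lt_of_le hj (min_le_left m n)
        have hjn : j < n := lt_of_lt_of_le hj (min_le_right m n)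
        have h1 := pext_row_sum hPu (min_le_left m n) hjm
        have h2 := pext_col_sum hQu (min_le_right m n) hjn
        simp only [hc]
        calc ∑ k ∈ range q, (Complex.normSq (pext P j k) + Complex.normSq (pext Q k j)) / 2
            = ((∑ k ∈ range q, Complex.normSq (pext P j k))
              + ∑ k ∈ range q, Complex.normSq (pext Q k j)) / 2 := by
              rw [← Finset.sum_add_distrib, Finset.sum_div]
          _ ≤ (1 + 1) / 2 := by
              have := add_le_add h1 h2
              linarith
          _ = 1 := by norm_num
      · intro k hk
        have hkm : k < m := lt_of_lt_of_le hk (min_le_left m n)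
        have hkn : k < n := lt_of_lt_of_le hk (min_le_right m n)
        have h1 := pext_col_sum hPu (min_le_left m n) hkm
        have h2 := pext_row_sum hQu (min_le_right m n) hkn
        simp only [hc]
        calc ∑ j ∈ range q, (Complex.normSq (pext P j k) + Complex.normSq (pext Q k j)) / 2
            = ((∑ j ∈ range q, Complex.normSq (pext P j k))
              + ∑ j ∈ range q, Complex.normSq (pext Q k j)) / 2 := by
              rw [← Finset.sum_add_distrib, Finset.sum_div]
          _ ≤ (1 + 1) / 2 := by
              have := add_le_add h1 h2
              linarith
          _ = 1 := by norm_num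
    calc finner B A ≤ ∑ j ∈ range q, ∑ k ∈ range q, σA j * σB k * c j k := hineq1
      _ ≤ ∑ i ∈ range q, σB i * σA i := hineq2
      _ = ∑ i ∈ range q, σA i * σB i := Finset.sum_congr rfl fun i _ => mul_comm _ _
  · -- the equality case
    intro U' hU' V' hV' hAeq' hBeq'
    set q := min m n with hq
    have hUone : U'ᴴ * U' = 1 := by
      rw [← Matrix.star_eq_conjTranspose]
      exact Matrix.mem_unitaryGroup_iff'.mp hU'
    have hVone : V'ᴴ * V' = 1 := by
      rw [← Matrix.star_eq_conjTranspose]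
      exact Matrix.mem_unitaryGroup_iff'.mp hV'
    have htr : Matrix.trace (Aᴴ * B)
        = ∑ j ∈ range q, ∑ k ∈ range q,
            ((σA j : ℂ) * (σB k : ℂ)) * (pext (1 : Matrix (Fin m) (Fin m) ℂ) j k
              * pext (1 : Matrix (Fin n) (Fin n) ℂ) k j) := by
      rw [hAeq', hBeq', trace_red m n σB σA U' U' V' V', hUone, hVone, trace_diag]
    have hcol : ∀ j ∈ range q, (∑ k ∈ range q,
        ((σA j : ℂ) * (σB k : ℂ)) * (pext (1 : Matrix (Fin m) (Fin m) ℂ) j k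
          * pext (1 : Matrix (Fin n) (Fin n) ℂ) k j)) = ((σA j * σB j : ℝ) : ℂ) := by
      intro j hj
      rw [mem_range] at hj
      have hjm : j < m := lt_of_lt_of_le hj (min_le_left m n)
      have hjn : j < n := lt_of_lt_of_le hj (min_le_right m n)
      rw [Finset.sum_eq_single j]
      · simp [pext, hjm, hjn]
      · intro k hk hkj
        rw [mem_range] at hk
        have hkm : k < m := lt_of_lt_of_le hk (min_le_left m n)
        have hkn : k < n := lt_of_lt_of_le hk (min_le_right m n)
        have : pext (1 : Matrix (Fin m) (Fin m) ℂ) j k = 0 := by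
          simp [pext, hjm, hkm, Matrix.one_apply, Fin.ext_iff]
          omega
        rw [this]
        ring
      · intro h; exact absurd (mem_range.mpr hj) h
    show (Matrix.trace (Aᴴ * B)).re = _
    rw [htr, Finset.sum_congr rfl hcol, ← Complex.ofReal_sum, Complex.ofReal_re]
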